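/- Let k be a field of characteristic 2 and let x = e_{1,m+1} + e_{2,m+2} + ... + e_{m,2m} ∈ gl(2m+1, k), and let e ∈ gl(2m+1,k) be the block matrix of type 2^m 1^1 given by ((0,0,I_m),(0,0,0),(0,0,0)) with corner blocks m×m and central block 1×1. Then an invertible matrix g commutes with both e and x if and only if g has block form ((aI_m, y, z),(0, a, 0),(0,0, aI_m)) for some nonzero a ∈ k, y ∈ Mat_{m×1}, z ∈ Mat_{m×m}. Consequently the common centralizer group of e and x has dimension m² + m + 1. -/
import Mathlib
set_option linter.unreachableTactic false
set_option linter.unusedTactic false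
set_option maxHeartbeats 1000000


/-- `e` of partition type `2^m 1^1` in `gl(2m+1,k)`: block form `((0,0,I_m),(0,0,0),(0,0,0))`
with blocks of sizes `m, 1, m`; entries `(a, a+m+1)` for `a < m`. -/
def eMat (k : Type*) [Field k] (m : ℕ) : Matrix (Fin (2 * m + 1)) (Fin (2 * m + 1)) k :=
  Matrix.of fun p q => if p.val < m ∧ q.val = p.val + m + 1 then 1 else 0

/-- `x = e_{1,m+1} + e_{2,m+2} + ... + e_{m,2m}` in `gl(2m+1,k)`:
entries `(a, a+m)` for `a < m`. -/
def xMat (k : Type*) [Field k] (m : ℕ) : Matrix (Fin (2 * m + 1)) (Fin (2 * m + 1)) k :=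
  Matrix.of fun p q => if p.val < m ∧ q.val = p.val + m then 1 else 0

/-- The matrix of block form `((a·I_m, y, z),(0, a, 0),(0, 0, a·I_m))`, with blocks of sizes
`m, 1, m`; `y` is a column vector and `z` an `m × m` matrix (indexed for convenience by the
full index set; only the entries `y p` for `p < m` and `z p q` for `p < m < q` are used). -/
def gMat (k : Type*) [Field k] (m : ℕ) (a : k) (y : Fin (2 * m + 1) → k)
    (z : Matrix (Fin (2 * m + 1)) (Fin (2 * m + 1)) k) :
    Matrix (Fin (2 * m + 1)) (Fin (2 * m + 1)) k :=
  Matrix.of fun p q =>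
    if p.val < m ∧ q.val = m then y p
    else if p.val < m ∧ m < q.val then z p q
    else if p = q then a else 0

/-- The subspace of matrices commuting with both `e` and `x`. -/
def commSub (k : Type*) [Field k] (m : ℕ) :
    Submodule k (Matrix (Fin (2 * m + 1)) (Fin (2 * m + 1)) k) where
  carrier := {g | g * eMat k m = eMat k m * g ∧ g * xMat k m = xMat k m * g}
  zero_mem' := by simp
  add_mem' := by
    rintro g h ⟨hg1, hg2⟩ ⟨hh1, hh2⟩
    constructor <;> simp [Matrix.add_mul, Matrix.mul_add, hg1, hg2, hh1, hh2]
  smul_mem' := by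
    rintro c g ⟨hg1, hg2⟩
    constructor <;> simp [Matrix.smul_mul, Matrix.mul_smul, hg1, hg2]

section aux
variable {k : Type*} [Field k] {m : ℕ}

private lemma eMat_apply (r q : Fin (2*m+1)) :
    eMat k m r q = if r.val < m ∧ q.val = r.val + m + 1 then (1:k) else 0 := rfl

private lemma xMat_apply (r q : Fin (2*m+1)) :
    xMat k m r q = if r.val < m ∧ q.val = r.val + m then (1:k) else 0 := rfl

private lemma mul_e_apply (g : Matrix (Fin (2*m+1)) (Fin (2*m+1)) k) (p q : Fin (2*m+1)) :
    (g * eMat k m) p q = if h : m < q.val then g p ⟨q.val - m - 1, by omega⟩ else 0 := by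
  have hq := q.isLt
  rw [Matrix.mul_apply]
  split_ifs with h
  · rw [Finset.sum_eq_single (⟨q.val - m - 1, by omega⟩ : Fin (2*m+1))]
    · rw [eMat_apply, if_pos ⟨by simp; omega, by simp; omega⟩, mul_one]
    · intro r _ hr
      rw [eMat_apply, if_neg, mul_zero]
      rintro ⟨h1, h2⟩
      exact hr (Fin.ext (by simp; omega))
    · intro habs; exact absurd (Finset.mem_univ _) habs
  · refine Finset.sum_eq_zero fun r _ => ?_
    rw [eMat_apply, if_neg (by omega), mul_zero]

private lemma e_mul_apply (g : Matrix (Fin (2*m+1)) (Fin (2*m+1)) k) (p q : Fin (2*m+1)) :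
    (eMat k m * g) p q = if h : p.val < m then g ⟨p.val + m + 1, by omega⟩ q else 0 := by
  rw [Matrix.mul_apply]
  split_ifs with h
  · rw [Finset.sum_eq_single (⟨p.val + m + 1, by omega⟩ : Fin (2*m+1))]
    · rw [eMat_apply, if_pos ⟨by simpa using h, by simp⟩, one_mul]
    · intro r _ hr
      rw [eMat_apply, if_neg, zero_mul]
      rintro ⟨h1, h2⟩
      exact hr (Fin.ext (by simp; omega))
    · intro habs; exact absurd (Finset.mem_univ _) habs
  · refine Finset.sum_eq_zero fun r _ => ?_
    rw [eMat_apply, if_neg (by omega), zero_mul]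

private lemma mul_x_apply (g : Matrix (Fin (2*m+1)) (Fin (2*m+1)) k) (p q : Fin (2*m+1)) :
    (g * xMat k m) p q = if h : m ≤ q.val ∧ q.val < 2*m then g p ⟨q.val - m, by omega⟩ else 0 := by
  rw [Matrix.mul_apply]
  split_ifs with h
  · rw [Finset.sum_eq_single (⟨q.val - m, by omega⟩ : Fin (2*m+1))]
    · rw [xMat_apply, if_pos ⟨by simp; omega, by simp; omega⟩, mul_one]
    · intro r _ hr
      rw [xMat_apply, if_neg, mul_zero]
      rintro ⟨h1, h2⟩
      exact hr (Fin.ext (by simp; omega))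
    · intro habs; exact absurd (Finset.mem_univ _) habs
  · refine Finset.sum_eq_zero fun r _ => ?_
    rw [xMat_apply, if_neg (by omega), mul_zero]

private lemma x_mul_apply (g : Matrix (Fin (2*m+1)) (Fin (2*m+1)) k) (p q : Fin (2*m+1)) :
    (xMat k m * g) p q = if h : p.val < m then g ⟨p.val + m, by omega⟩ q else 0 := by
  rw [Matrix.mul_apply]
  split_ifs with h
  · rw [Finset.sum_eq_single (⟨p.val + m, by omega⟩ : Fin (2*m+1))]
    · rw [xMat_apply, if_pos ⟨by simpa using h, by simp⟩, one_mul]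
    · intro r _ hr
      rw [xMat_apply, if_neg, zero_mul]
      rintro ⟨h1, h2⟩
      exact hr (Fin.ext (by simp; omega))
    · intro habs; exact absurd (Finset.mem_univ _) habs
  · refine Finset.sum_eq_zero fun r _ => ?_
    rw [xMat_apply, if_neg (by omega), zero_mul]



private lemma struct (g : Matrix (Fin (2*m+1)) (Fin (2*m+1)) k)
    (he : g * eMat k m = eMat k m * g) (hx : g * xMat k m = xMat k m * g) :
    ∀ p q : Fin (2*m+1), ¬(p.val < m ∧ m ≤ q.val) →
      g p q = if p = q then g ⟨m, by omega⟩ ⟨m, by omega⟩ else 0 := by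
  have GC : ∀ {i i' j j' : ℕ} (hi : i < 2*m+1) (hi' : i' < 2*m+1) (hj : j < 2*m+1)
      (hj' : j' < 2*m+1), i = i' → j = j' → g ⟨i,hi⟩ ⟨j,hj⟩ = g ⟨i',hi'⟩ ⟨j',hj'⟩ := by
    rintro i i' j j' hi hi' hj hj' rfl rfl; rfl
  have HE : ∀ p q : Fin (2*m+1),
      (if h : m < q.val then g p ⟨q.val - m - 1, by omega⟩ else 0)
        = (if h : p.val < m then g ⟨p.val + m + 1, by omega⟩ q else 0) := by
    intro p q
    have h := congrFun (congrFun he p) q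
    rwa [mul_e_apply, e_mul_apply] at h
  have HX : ∀ p q : Fin (2*m+1),
      (if h : m ≤ q.val ∧ q.val < 2*m then g p ⟨q.val - m, by omega⟩ else 0)
        = (if h : p.val < m then g ⟨p.val + m, by omega⟩ q else 0) := by
    intro p q
    have h := congrFun (congrFun hx p) q
    rwa [mul_x_apply, x_mul_apply] at h
  -- rows ≥ m, columns < m vanish
  have Z1 : ∀ (i j : ℕ) (hi : i < 2*m+1) (hj : j < m), m ≤ i → g ⟨i,hi⟩ ⟨j, by omega⟩ = 0 := by
    intro i j hi hj him
    have h := HE ⟨i,hi⟩ ⟨j+m+1, by omega⟩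
    rw [dif_pos (by first | omega | (simp; omega) | simp), dif_neg (by first | omega | (simp; omega) | simp)] at h
    exact (GC _ _ _ _ rfl (by first | omega | (simp; omega) | simp)).trans h
  -- rows > m, columns ≤ m vanish
  have Z2 : ∀ (i j : ℕ) (hi : i < 2*m+1) (hj : j ≤ m), m < i → g ⟨i,hi⟩ ⟨j, by omega⟩ = 0 := by
    intro i j hi hj him
    have h := HE ⟨i-m-1, by omega⟩ ⟨j, by omega⟩
    rw [dif_neg (by first | omega | (simp; omega) | simp), dif_pos (by first | omega | (simp; omega) | simp)] at h
    exact (GC _ _ _ _ (by first | omega | (simp; omega) | simp) rfl).trans h.symm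
  -- rows m..2m-1, column 2m vanish
  have Z3 : ∀ (i : ℕ) (h1 : m ≤ i) (h2 : i < 2*m), g ⟨i, by omega⟩ ⟨2*m, by omega⟩ = 0 := by
    intro i h1 h2
    have h := HX ⟨i-m, by omega⟩ ⟨2*m, by omega⟩
    rw [dif_neg (by first | omega | (simp; omega) | simp), dif_pos (by first | omega | (simp; omega) | simp)] at h
    exact (GC _ _ _ _ (by first | omega | (simp; omega) | simp) rfl).trans h.symm
  have R1 : ∀ (p j : ℕ) (hp : p < m) (hj : j < m),
      g ⟨p, by omega⟩ ⟨j, by omega⟩ = g ⟨p+m, by omega⟩ ⟨j+m, by omega⟩ := by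
    intro p j hp hj
    have h := HX ⟨p, by omega⟩ ⟨j+m, by omega⟩
    rw [dif_pos (by first | omega | (simp; omega) | simp), dif_pos (by first | omega | (simp; omega) | simp)] at h
    exact (GC _ _ _ _ rfl (by first | omega | (simp; omega) | simp)).symm.trans h
  have R2 : ∀ (p j : ℕ) (hp : p < m) (hj : j < m),
      g ⟨p, by omega⟩ ⟨j, by omega⟩ = g ⟨p+m+1, by omega⟩ ⟨j+m+1, by omega⟩ := by
    intro p j hp hj
    have h := HE ⟨p, by omega⟩ ⟨j+m+1, by omega⟩
    rw [dif_pos (by first | omega | (simp; omega) | simp), dif_pos (by first | omega | (simp; omega) | simp)] at h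
    exact (GC _ _ _ _ rfl (by first | omega | (simp; omega) | simp)).symm.trans h
  have S : ∀ (p j : ℕ) (hp : p+1 < m) (hj : j+1 < m),
      g ⟨p+1, by omega⟩ ⟨j+1, by omega⟩ = g ⟨p, by omega⟩ ⟨j, by omega⟩ :=
    fun p j hp hj => (R1 (p+1) (j+1) hp hj).trans
      (((GC _ _ _ _ (by first | omega | (simp; omega) | simp) (by first | omega | (simp; omega) | simp)).trans (R2 p j (by first | omega | (simp; omega) | simp) (by first | omega | (simp; omega) | simp)).symm))
  have Diag : ∀ (t p j : ℕ) (h1 : p+t < m) (h2 : j+t < m),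
      g ⟨p, by omega⟩ ⟨j, by omega⟩ = g ⟨p+t, by omega⟩ ⟨j+t, by omega⟩ := by
    intro t
    induction t with
    | zero => intro p j h1 h2; exact GC _ _ _ _ (by first | omega | (simp; omega) | simp) (by first | omega | (simp; omega) | simp)
    | succ t ih =>
      intro p j h1 h2
      exact ((ih p j (by first | omega | (simp; omega) | simp) (by first | omega | (simp; omega) | simp)).trans
        ((S (p+t) (j+t) (by first | omega | (simp; omega) | simp) (by first | omega | (simp; omega) | simp)).symm.trans (GC _ _ _ _ (by first | omega | (simp; omega) | simp) (by first | omega | (simp; omega) | simp))))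
  have L1 : ∀ (p : ℕ) (hp : p+1 < m), g ⟨p, by omega⟩ ⟨m-1, by omega⟩ = 0 := by
    intro p hp
    exact (R2 p (m-1) (by first | omega | (simp; omega) | simp) (by first | omega | (simp; omega) | simp)).trans
      ((GC _ _ _ _ rfl (by first | omega | (simp; omega) | simp)).trans (Z3 (p+m+1) (by first | omega | (simp; omega) | simp) (by first | omega | (simp; omega) | simp)))
  have L2 : ∀ (j : ℕ) (h1 : 1 ≤ j) (h2 : j < m), g ⟨0, by omega⟩ ⟨j, by omega⟩ = 0 := by
    intro j h1 h2
    exact (Diag (m-1-j) 0 j (by first | omega | (simp; omega) | simp) (by first | omega | (simp; omega) | simp)).trans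
      ((GC _ _ _ _ (by first | omega | (simp; omega) | simp) (by first | omega | (simp; omega) | simp)).trans (L1 (m-1-j) (by first | omega | (simp; omega) | simp)))
  have T : ∀ (p j : ℕ) (hp : p < m) (hj : j < m),
      g ⟨p, by omega⟩ ⟨j, by omega⟩
        = if p = j then g ⟨m, by omega⟩ ⟨m, by omega⟩ else 0 := by
    intro p j hp hj
    rcases lt_trichotomy p j with hlt | heq | hgt
    · rw [if_neg (by first | omega | (simp; omega) | simp)]
      exact ((Diag p 0 (j-p) (by first | omega | (simp; omega) | simp) (by first | omega | (simp; omega) | simp)).trans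
        (GC _ _ _ _ (by first | omega | (simp; omega) | simp) (by first | omega | (simp; omega) | simp))).symm.trans (L2 (j-p) (by first | omega | (simp; omega) | simp) (by first | omega | (simp; omega) | simp))
    · subst heq
      rw [if_pos rfl]
      exact ((Diag p 0 0 (by first | omega | (simp; omega) | simp) (by first | omega | (simp; omega) | simp)).trans (GC _ _ _ _ (by first | omega | (simp; omega) | simp) (by first | omega | (simp; omega) | simp))).symm.trans
        ((R1 0 0 (by first | omega | (simp; omega) | simp) (by first | omega | (simp; omega) | simp)).trans (GC _ _ _ _ (by first | omega | (simp; omega) | simp) (by first | omega | (simp; omega) | simp)))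
    · rw [if_neg (by first | omega | (simp; omega) | simp)]
      exact ((Diag j (p-j) 0 (by first | omega | (simp; omega) | simp) (by first | omega | (simp; omega) | simp)).trans
        (GC _ _ _ _ (by first | omega | (simp; omega) | simp) (by first | omega | (simp; omega) | simp))).symm.trans
        (((R1 (p-j) 0 (by first | omega | (simp; omega) | simp) (by first | omega | (simp; omega) | simp)).trans (GC _ _ _ _ rfl (by first | omega | (simp; omega) | simp))).trans
          (Z2 (p-j+m) m (by first | omega | (simp; omega) | simp) (by first | omega | (simp; omega) | simp) (by first | omega | (simp; omega) | simp)))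
  have H : ∀ (j : ℕ) (h1 : m < j) (hj : j < 2*m+1), g ⟨m, by omega⟩ ⟨j, hj⟩ = 0 := by
    intro j h1 hj
    rcases eq_or_lt_of_le (show j ≤ 2*m by omega) with h2 | h2
    · exact (GC _ _ _ _ rfl h2).trans (Z3 m (by first | omega | (simp; omega) | simp) (by first | omega | (simp; omega) | simp))
    · exact ((R1 0 (j-m) (by first | omega | (simp; omega) | simp) (by first | omega | (simp; omega) | simp)).trans
        (GC _ _ _ _ (by first | omega | (simp; omega) | simp) (by first | omega | (simp; omega) | simp))).symm.trans (L2 (j-m) (by first | omega | (simp; omega) | simp) (by first | omega | (simp; omega) | simp))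
  intro p q hpq
  by_cases h1 : p.val < m
  · have h2 : q.val < m := by omega
    simp only [Fin.ext_iff]
    exact T p.val q.val h1 h2
  · by_cases h2 : p.val = m
    · rcases lt_trichotomy q.val m with h3 | h3 | h3
      · rw [if_neg (by simp [Fin.ext_iff]; omega)]
        exact Z1 p.val q.val p.isLt h3 (by first | omega | (simp; omega) | simp)
      · rw [if_pos (Fin.ext (by first | omega | (simp; omega) | simp))]
        exact GC _ _ _ _ h2 h3
      · rw [if_neg (by simp [Fin.ext_iff]; omega)]
        exact (GC _ _ _ _ h2 rfl).trans (H q.val h3 q.isLt)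
    · by_cases h3 : q.val ≤ m
      · rw [if_neg (by simp [Fin.ext_iff]; omega)]
        exact Z2 p.val q.val p.isLt h3 (by first | omega | (simp; omega) | simp)
      · have hp' : p.val - m - 1 < m := by omega
        have hq' : q.val - m - 1 < m := by omega
        have e1 := R2 (p.val-m-1) (q.val-m-1) hp' hq'
        have e2 := T (p.val-m-1) (q.val-m-1) hp' hq'
        have e3 : g p q = g ⟨p.val-m-1, by omega⟩ ⟨q.val-m-1, by omega⟩ :=
          (e1.trans (GC _ _ _ _ (by first | omega | (simp; omega) | simp) (by first | omega | (simp; omega) | simp))).symm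
        rw [e3, e2]
        simp only [Fin.ext_iff]
        split_ifs with h4 h5
        · rfl
        · exact absurd (by omega : p.val = q.val) h5
        · exact absurd (by omega : p.val - m - 1 = q.val - m - 1) h4
        · rfl

private lemma gMat_comm_e (a : k) (y : Fin (2*m+1) → k)
    (z : Matrix (Fin (2*m+1)) (Fin (2*m+1)) k) :
    gMat k m a y z * eMat k m = eMat k m * gMat k m a y z := by
  ext p q
  rw [mul_e_apply, e_mul_apply]
  have hp := p.isLt; have hq := q.isLt
  simp only [gMat, Matrix.of_apply, Fin.ext_iff]
  split_ifs <;> first | rfl | (exfalso; simp_all; try omega) | (exfalso; omega)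

private lemma gMat_comm_x (a : k) (y : Fin (2*m+1) → k)
    (z : Matrix (Fin (2*m+1)) (Fin (2*m+1)) k) :
    gMat k m a y z * xMat k m = xMat k m * gMat k m a y z := by
  ext p q
  rw [mul_x_apply, x_mul_apply]
  have hp := p.isLt; have hq := q.isLt
  simp only [gMat, Matrix.of_apply, Fin.ext_iff]
  split_ifs <;> first | rfl | (exfalso; simp_all; try omega) | (exfalso; omega)


private lemma gcongr (g : Matrix (Fin (2*m+1)) (Fin (2*m+1)) k) {i i' j j' : ℕ}
    (hi : i < 2*m+1) (hi' : i' < 2*m+1) (hj : j < 2*m+1) (hj' : j' < 2*m+1)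
    (h1 : i = i') (h2 : j = j') : g ⟨i,hi⟩ ⟨j,hj⟩ = g ⟨i',hi'⟩ ⟨j',hj'⟩ := by
  subst h1; subst h2; rfl

/-- any matrix commuting with `e` and `x` has the `gMat` shape -/
private lemma eq_gMat (g : Matrix (Fin (2*m+1)) (Fin (2*m+1)) k)
    (he : g * eMat k m = eMat k m * g) (hx : g * xMat k m = xMat k m * g) :
    g = gMat k m (g ⟨m, by omega⟩ ⟨m, by omega⟩) (fun p => g p ⟨m, by omega⟩) g := by
  have hs := struct g he hx
  ext p q
  simp only [gMat, Matrix.of_apply]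
  split_ifs with h1 h2 h3
  · exact gcongr g p.isLt p.isLt q.isLt (by omega) rfl h1.2
  · rfl
  · rw [hs p q (by omega), if_pos h3]
  · rw [hs p q (by omega), if_neg h3]

noncomputable def paramMap (k : Type*) [Field k] (m : ℕ) :
    (k × (Fin m → k) × Matrix (Fin m) (Fin m) k) →ₗ[k]
      Matrix (Fin (2*m+1)) (Fin (2*m+1)) k where
  toFun t := gMat k m t.1
    (fun p => if h : p.val < m then t.2.1 ⟨p.val, h⟩ else 0)
    (Matrix.of fun p q => if h : p.val < m ∧ m < q.val then
      t.2.2 ⟨p.val, h.1⟩ ⟨q.val - m - 1, by have := q.isLt; omega⟩ else 0)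
  map_add' t s := by
    ext p q
    simp only [gMat, Matrix.of_apply, Matrix.add_apply, Prod.fst_add, Prod.snd_add,
      Pi.add_apply]
    split_ifs <;> simp
  map_smul' c t := by
    ext p q
    simp only [gMat, Matrix.of_apply, Matrix.smul_apply, Prod.smul_fst, Prod.smul_snd,
      Pi.smul_apply, RingHom.id_apply, smul_eq_mul]
    split_ifs <;> simp

private lemma paramMap_inj : Function.Injective (paramMap k m) := by
  rw [injective_iff_map_eq_zero]
  intro t h
  have h' : ∀ p q : Fin (2*m+1), gMat k m t.1
      (fun p => if h : p.val < m then t.2.1 ⟨p.val, h⟩ else 0)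
      (Matrix.of fun p q => if h : p.val < m ∧ m < q.val then
        t.2.2 ⟨p.val, h.1⟩ ⟨q.val - m - 1, by have := q.isLt; omega⟩ else 0) p q = 0 :=
    fun p q => congrFun (congrFun h p) q
  obtain ⟨a, y, z⟩ := t
  refine Prod.ext ?_ (Prod.ext ?_ ?_)
  · have := h' ⟨m, by omega⟩ ⟨m, by omega⟩
    simpa [gMat] using this
  · funext i
    have hi := i.isLt
    have := h' ⟨i.val, by omega⟩ ⟨m, by omega⟩
    simpa [gMat, hi] using this
  · show z = 0
    funext i j
    have hi := i.isLt; have hj := j.isLt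
    have := h' ⟨i.val, by omega⟩ ⟨j.val + m + 1, by omega⟩
    have e : j.val + m + 1 - m - 1 = j.val := by omega
    have e2 : ¬(j.val + m + 1 = m) := by omega
    have e3 : m < j.val + m + 1 := by omega
    simpa [gMat, hi, e, e2, e3] using this

private lemma paramMap_range : LinearMap.range (paramMap k m) = commSub k m := by
  apply le_antisymm
  · rintro w ⟨t, rfl⟩
    exact ⟨gMat_comm_e _ _ _, gMat_comm_x _ _ _⟩
  · rintro g ⟨he, hx⟩
    refine ⟨(g ⟨m, by omega⟩ ⟨m, by omega⟩,
      fun i => g ⟨i.val, by omega⟩ ⟨m, by omega⟩,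
      Matrix.of fun i j => g ⟨i.val, by omega⟩ ⟨j.val + m + 1, by omega⟩), ?_⟩
    have hs := struct g he hx
    show gMat k m _ _ _ = g
    ext p q
    by_cases h1 : p.val < m ∧ q.val = m
    · simp only [gMat, Matrix.of_apply]
      rw [if_pos h1, dif_pos h1.1]
      exact gcongr g (by omega) p.isLt (by omega) q.isLt rfl h1.2.symm
    · by_cases h2 : p.val < m ∧ m < q.val
      · simp only [gMat, Matrix.of_apply]
        rw [if_neg h1, if_pos h2, dif_pos h2]
        exact gcongr g (by omega) p.isLt (by omega) q.isLt rfl (by omega)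
      · simp only [gMat, Matrix.of_apply]
        rw [if_neg h1, if_neg h2]
        by_cases h3 : p = q
        · rw [if_pos h3, hs p q (by omega), if_pos h3]
        · rw [if_neg h3, hs p q (by omega), if_neg h3]



end aux

theorem stmt_15 {k : Type*} [Field k] [CharP k 2] (m : ℕ) :
    (∀ g : (Matrix (Fin (2 * m + 1)) (Fin (2 * m + 1)) k)ˣ,
      ((↑g : Matrix (Fin (2 * m + 1)) (Fin (2 * m + 1)) k) * eMat k m =
          eMat k m * (↑g : Matrix (Fin (2 * m + 1)) (Fin (2 * m + 1)) k) ∧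
        (↑g : Matrix (Fin (2 * m + 1)) (Fin (2 * m + 1)) k) * xMat k m =
          xMat k m * (↑g : Matrix (Fin (2 * m + 1)) (Fin (2 * m + 1)) k)) ↔
      ∃ (a : k) (y : Fin (2 * m + 1) → k)
        (z : Matrix (Fin (2 * m + 1)) (Fin (2 * m + 1)) k),
        a ≠ 0 ∧ (↑g : Matrix (Fin (2 * m + 1)) (Fin (2 * m + 1)) k) = gMat k m a y z) ∧
    Module.finrank k (commSub k m) = m ^ 2 + m + 1 := by
  constructor
  · intro g
    constructor
    · rintro ⟨he, hx⟩
      refine ⟨(↑g : Matrix (Fin (2*m+1)) (Fin (2*m+1)) k) ⟨m, by omega⟩ ⟨m, by omega⟩,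
        fun p => (↑g : Matrix (Fin (2*m+1)) (Fin (2*m+1)) k) p ⟨m, by omega⟩,
        (↑g : Matrix (Fin (2*m+1)) (Fin (2*m+1)) k), ?_, eq_gMat _ he hx⟩
      intro ha0
      have heq := eq_gMat (↑g : Matrix (Fin (2*m+1)) (Fin (2*m+1)) k) he hx
      have hrow : ∀ r : Fin (2*m+1),
          (↑g : Matrix (Fin (2*m+1)) (Fin (2*m+1)) k) ⟨m, by omega⟩ r = 0 := by
        intro r
        rw [heq]
        simp only [gMat, Matrix.of_apply]
        rw [if_neg (by first | omega | (simp; omega) | simp),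
          if_neg (by first | omega | (simp; omega) | simp)]
        split_ifs with h
        · exact ha0
        · rfl
      have h1 := congrFun (congrFun g.mul_inv ⟨m, by omega⟩) ⟨m, by omega⟩
      rw [Matrix.mul_apply] at h1
      simp only [hrow, zero_mul, Finset.sum_const_zero] at h1
      rw [Matrix.one_apply_eq] at h1
      exact zero_ne_one h1
    · rintro ⟨a, y, z, ha, heq⟩
      rw [heq]
      exact ⟨gMat_comm_e a y z, gMat_comm_x a y z⟩
  · rw [← paramMap_range, LinearMap.finrank_range_of_inj paramMap_inj]
    simp [Module.finrank_prod, Module.finrank_matrix]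
    ring
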